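/- For all complex numbers α, β, γ with (α+1)/2, (β+1)/2, γ+1 not non-positive integers, and for all non-negative integers n, the quantity z_n = ((α+1)/2)_n ((β+1)/2)_n / (γ+1)_n · (z_0 + (C/2) ∑_{k=0}^{n-1} (1/2)_k (γ+1)_k / (((α+1)/2)_{k+1} ((β+1)/2)_{k+1})) satisfies the recurrence (n+γ+1) z_{n+1} − (n+(α+1)/2)(n+(β+1)/2) z_n = (C/2)(1/2)_n, for any constants z_0, C ∈ ℂ. -/

import Mathlib

/-- Pochhammer symbol (rising factorial) `(a)_n = a(a+1)⋯(a+n-1)`. -/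
noncomputable def poch (a : ℂ) (n : ℕ) : ℂ := (ascPochhammer ℂ n).eval a

lemma poch_succ (a : ℂ) (n : ℕ) : poch a (n + 1) = poch a n * (a + n) := by
  simp [poch, ascPochhammer_succ_right]

lemma poch_ne_zero (a : ℂ) (h : ∀ k : ℕ, a ≠ -(k : ℂ)) (n : ℕ) : poch a n ≠ 0 := by
  induction n with
  | zero => simp [poch]
  | succ n ih =>
    rw [poch_succ]
    exact mul_ne_zero ih (fun hc => h n (by linear_combination hc))

lemma alg (a b g A B G P S z0 C : ℂ) (hA : A ≠ 0) (hB : B ≠ 0) (hG : G ≠ 0)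
    (ha : a ≠ 0) (hb : b ≠ 0) (hg : g ≠ 0) :
    g * (A * a * (B * b) / (G * g) * (z0 + C / 2 * (S + P * G / (A * a * (B * b))))) -
      a * b * (A * B / G * (z0 + C / 2 * S)) = C / 2 * P := by
  have hX : A * a * (B * b) ≠ 0 := mul_ne_zero (mul_ne_zero hA ha) (mul_ne_zero hB hb)
  have h1 : g * (A * a * (B * b) / (G * g)) = a * b * (A * B / G) := by
    rw [mul_div_assoc', mul_div_assoc', div_eq_div_iff (mul_ne_zero hG hg) hG]
    ring
  have h2 : g * (A * a * (B * b) / (G * g)) * (C / 2 * (P * G / (A * a * (B * b)))) =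
      C / 2 * P := by
    rw [mul_div_assoc', div_mul_div_comm, div_mul_div_comm,
      div_eq_iff (mul_ne_zero (mul_ne_zero hG hg) (mul_ne_zero two_ne_zero hX))]
    ring
  linear_combination (z0 + C / 2 * S) * h1 + h2

theorem stmt4 (α β γ z0 C : ℂ)
    (hα : ∀ k : ℕ, (α + 1) / 2 ≠ -(k : ℂ))
    (hβ : ∀ k : ℕ, (β + 1) / 2 ≠ -(k : ℂ))
    (hγ : ∀ k : ℕ, γ + 1 ≠ -(k : ℂ))
    (z : ℕ → ℂ)
    (hz : ∀ n : ℕ, z n =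
      poch ((α + 1) / 2) n * poch ((β + 1) / 2) n / poch (γ + 1) n *
        (z0 + C / 2 * ∑ k ∈ Finset.range n,
          poch (1 / 2) k * poch (γ + 1) k /
            (poch ((α + 1) / 2) (k + 1) * poch ((β + 1) / 2) (k + 1)))) :
    ∀ n : ℕ, ((n : ℂ) + γ + 1) * z (n + 1) -
        ((n : ℂ) + (α + 1) / 2) * ((n : ℂ) + (β + 1) / 2) * z n =
      C / 2 * poch (1 / 2) n := by
  intro n
  have hA := poch_ne_zero _ hα n
  have hB := poch_ne_zero _ hβ n
  have hG := poch_ne_zero _ hγ n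
  have ha : (α + 1) / 2 + n ≠ 0 := fun hc => hα n (by linear_combination hc)
  have hb : (β + 1) / 2 + n ≠ 0 := fun hc => hβ n (by linear_combination hc)
  have hg : γ + 1 + n ≠ 0 := fun hc => hγ n (by linear_combination hc)
  rw [hz n, hz (n + 1), Finset.sum_range_succ, poch_succ ((α + 1) / 2) n,
    poch_succ ((β + 1) / 2) n, poch_succ (γ + 1) n]
  have key := alg ((α + 1) / 2 + n) ((β + 1) / 2 + n) (γ + 1 + n)
    (poch ((α + 1) / 2) n) (poch ((β + 1) / 2) n) (poch (γ + 1) n)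
    (poch (1 / 2) n)
    (∑ k ∈ Finset.range n, poch (1 / 2) k * poch (γ + 1) k /
      (poch ((α + 1) / 2) (k + 1) * poch ((β + 1) / 2) (k + 1)))
    z0 C hA hB hG ha hb hg
  linear_combination key
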